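/- Under the standing assumptions, the family {g_Q : Q is an interior square of S} of functions g_Q : S → ℝ, where g_Q(Q) = −4, g_Q(Q') = 1 for each diagonal neighbor Q' of Q, and g_Q = 0 at all other squares of S, is linearly independent. -/

import Mathlib

/-- The closed unit square `[i,i+1] × [j,j+1] ⊆ ℝ²` indexed by `q = (i,j) ∈ ℤ × ℤ`. -/
def unitSq (q : ℤ × ℤ) : Set (ℝ × ℝ) :=
  Set.Icc (q.1 : ℝ) (q.1 + 1) ×ˢ Set.Icc (q.2 : ℝ) (q.2 + 1)

/-- `Ω̄`, the union of the closed squares of the mesh `S`. -/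
def meshRegion (S : Finset (ℤ × ℤ)) : Set (ℝ × ℝ) := ⋃ q ∈ S, unitSq q

/-- `v` is an interior vertex of `S`: all four grid squares having `v` as a corner belong
to `S`. -/
abbrev interiorVertex (S : Finset (ℤ × ℤ)) (v : ℤ × ℤ) : Prop :=
  (v.1 - 1, v.2 - 1) ∈ S ∧ (v.1 - 1, v.2) ∈ S ∧ (v.1, v.2 - 1) ∈ S ∧ v ∈ S

/-- `v` is a mesh vertex of `S`: it is a corner of some square of `S`. -/
abbrev meshVertex (S : Finset (ℤ × ℤ)) (v : ℤ × ℤ) : Prop :=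
  (v.1 - 1, v.2 - 1) ∈ S ∨ (v.1 - 1, v.2) ∈ S ∨ (v.1, v.2 - 1) ∈ S ∨ v ∈ S

/-- `v` is a boundary vertex of `S`: a mesh vertex which is not interior. -/
abbrev boundaryVertex (S : Finset (ℤ × ℤ)) (v : ℤ × ℤ) : Prop :=
  meshVertex S v ∧ ¬ interiorVertex S v

/-- The four corners of the square indexed by `q`. -/
def cornersF (q : ℤ × ℤ) : Finset (ℤ × ℤ) :=
  {q, (q.1 + 1, q.2), (q.1, q.2 + 1), (q.1 + 1, q.2 + 1)}

/-- `q` is an interior square: all four of its corners are interior vertices. -/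
abbrev interiorSquare (S : Finset (ℤ × ℤ)) (q : ℤ × ℤ) : Prop :=
  interiorVertex S q ∧ interiorVertex S (q.1 + 1, q.2) ∧
    interiorVertex S (q.1, q.2 + 1) ∧ interiorVertex S (q.1 + 1, q.2 + 1)

/-- The square `(i,j)` is red if `i + j` is even (and black otherwise). -/
abbrev isRed (q : ℤ × ℤ) : Prop := (q.1 + q.2) % 2 = 0

/-- The standing assumptions on the mesh `S`: it is nonempty, `Ω` is connected and simply
connected, no square has four boundary corners, every grid edge shared by two squares of `S`
has an interior endpoint, and no square has exactly two boundary corners lying at diagonally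
opposite corners. -/
structure Standing (S : Finset (ℤ × ℤ)) : Prop where
  nonempty : S.Nonempty
  connected : IsConnected (interior (meshRegion S))
  simplyConnected : SimplyConnectedSpace ↥(interior (meshRegion S))
  noFourBoundary : ∀ q ∈ S,
    ¬ (boundaryVertex S q ∧ boundaryVertex S (q.1 + 1, q.2) ∧
        boundaryVertex S (q.1, q.2 + 1) ∧ boundaryVertex S (q.1 + 1, q.2 + 1))
  edgeH : ∀ v : ℤ × ℤ, v ∈ S → (v.1, v.2 - 1) ∈ S →
    interiorVertex S v ∨ interiorVertex S (v.1 + 1, v.2)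
  edgeV : ∀ v : ℤ × ℤ, v ∈ S → (v.1 - 1, v.2) ∈ S →
    interiorVertex S v ∨ interiorVertex S (v.1, v.2 + 1)
  noDiagOne : ∀ q ∈ S,
    ¬ (boundaryVertex S q ∧ boundaryVertex S (q.1 + 1, q.2 + 1) ∧
        interiorVertex S (q.1 + 1, q.2) ∧ interiorVertex S (q.1, q.2 + 1))
  noDiagTwo : ∀ q ∈ S,
    ¬ (boundaryVertex S (q.1 + 1, q.2) ∧ boundaryVertex S (q.1, q.2 + 1) ∧
        interiorVertex S q ∧ interiorVertex S (q.1 + 1, q.2 + 1))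

/-- The discrete `x`-derivative `∂ˣc(Q)` of a scalar vertex function on the square `Q`. -/
def dX (c : ℤ × ℤ → ℝ) (q : ℤ × ℤ) : ℝ :=
  c (q.1 + 1, q.2) + c (q.1 + 1, q.2 + 1) - c (q.1, q.2) - c (q.1, q.2 + 1)

/-- The discrete `y`-derivative `∂ʸc(Q)` of a scalar vertex function on the square `Q`. -/
def dY (c : ℤ × ℤ → ℝ) (q : ℤ × ℤ) : ℝ :=
  c (q.1, q.2 + 1) + c (q.1 + 1, q.2 + 1) - c (q.1, q.2) - c (q.1 + 1, q.2)

/-- The discrete divergence `(Dc)(Q) = ∂ˣc¹(Q) + ∂ʸc²(Q)`. -/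
def Ddiv (c : ℤ × ℤ → ℝ × ℝ) (q : ℤ × ℤ) : ℝ :=
  dX (fun v => (c v).1) q + dY (fun v => (c v).2) q

/-- The discrete curl `(Cc)(Q) = ∂ˣc²(Q) − ∂ʸc¹(Q)`. -/
def Ccurl (c : ℤ × ℤ → ℝ × ℝ) (q : ℤ × ℤ) : ℝ :=
  dX (fun v => (c v).2) q - dY (fun v => (c v).1) q

/-- `q'` is one of the four diagonal neighbors `(i±1, j±1)` of the square `q = (i,j)`. -/
abbrev diagNbr (q q' : ℤ × ℤ) : Prop :=
  (q'.1 - q.1 = 1 ∨ q'.1 - q.1 = -1) ∧ (q'.2 - q.2 = 1 ∨ q'.2 - q.2 = -1)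

/-- The discrete curl `g_Q` of the locally divergence-free basis element `Ψ_h^Q` attached to
the square `Q`: it takes the value `−4` at `Q`, the value `1` at each of the four diagonal
neighbors of `Q`, and `0` elsewhere. -/
noncomputable def gQ (q : ℤ × ℤ) : (ℤ × ℤ) → ℝ := fun q' =>
  if q' = q then -4 else if diagNbr q q' then 1 else 0

/-- Under the standing assumptions, the family
`{g_Q : Q is an interior square of S}` of functions on the squares of `S`, where `g_Q(Q) = −4`,
`g_Q(Q') = 1` for each diagonal neighbor `Q'` of `Q`, and `g_Q = 0` at all other squares of
`S`, is linearly independent. -/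
theorem gQ_linearIndependent (S : Finset (ℤ × ℤ)) (h : Standing S) :
    LinearIndependent ℝ
      (fun Q : {q : ℤ × ℤ // q ∈ S ∧ interiorSquare S q} =>
        fun s : {x : ℤ × ℤ // x ∈ S} => gQ Q.1 s.1) := by
  classical
  rw [linearIndependent_iff']
  intro s g hsum
  by_contra hcon
  push_neg at hcon
  obtain ⟨i, his, hgi⟩ := hcon
  obtain ⟨im, hims, him⟩ := s.exists_max_image (fun j => |g j|) ⟨i, his⟩
  set M := |g im| with hM
  have hMpos : 0 < M := lt_of_lt_of_le (abs_pos.mpr hgi) (him i his)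
  set t := s.filter (fun j => |g j| = M) with ht
  have htne : t.Nonempty := ⟨im, by simp [ht, hims, hM]⟩
  obtain ⟨i₀, hi₀t, hmax⟩ := t.exists_max_image (fun j => (j.1.1 : ℤ)) htne
  have hi₀s : i₀ ∈ s := (Finset.mem_filter.mp hi₀t).1
  have hi₀M : |g i₀| = M := (Finset.mem_filter.mp hi₀t).2
  -- evaluate the vanishing linear combination at the square i₀
  have hx : (∑ j ∈ s, g j • (fun x : {x : ℤ × ℤ // x ∈ S} => gQ j.1 x.1))
      ⟨i₀.1, i₀.2.1⟩ = 0 := by rw [hsum]; rfl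
  rw [Finset.sum_apply] at hx
  simp only [Pi.smul_apply, smul_eq_mul] at hx
  rw [← Finset.sum_erase_add _ _ hi₀s] at hx
  have hg0 : gQ i₀.1 i₀.1 = -4 := by simp [gQ]
  set T := (s.erase i₀).filter (fun j => diagNbr j.1 i₀.1) with hT
  have hsplit : ∑ j ∈ s.erase i₀, g j * gQ j.1 i₀.1 = ∑ j ∈ T, g j := by
    rw [hT, Finset.sum_filter]
    apply Finset.sum_congr rfl
    intro j hj
    have hne : i₀.1 ≠ j.1 := fun hh => (Finset.ne_of_mem_erase hj) (Subtype.ext hh.symm)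
    by_cases hd : diagNbr j.1 i₀.1
    · simp [gQ, hne, hd]
    · simp [gQ, hne, hd]
  rw [hsplit, hg0] at hx
  have key : ∑ j ∈ T, g j = 4 * g i₀ := by linarith
  -- the sign of g i₀
  set ε : ℝ := if 0 ≤ g i₀ then 1 else -1 with hε
  have hεabs : ∀ y : ℝ, ε * y ≤ |y| := by
    intro y
    rcases le_or_gt 0 (g i₀) with hc | hc
    · simp only [hε, if_pos hc, one_mul]; exact le_abs_self y
    · simp only [hε, if_neg (not_le.mpr hc)]
      calc (-1) * y = -y := by ring
      _ ≤ |y| := neg_le_abs y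
  have hεM : ε * g i₀ = M := by
    rw [← hi₀M]
    rcases le_or_gt 0 (g i₀) with hc | hc
    · simp [hε, if_pos hc, abs_of_nonneg hc]
    · simp [hε, if_neg (not_le.mpr hc), abs_of_neg hc]
  -- T has at most 4 elements
  set D : Finset (ℤ × ℤ) :=
    {(i₀.1.1 - 1, i₀.1.2 - 1), (i₀.1.1 - 1, i₀.1.2 + 1),
     (i₀.1.1 + 1, i₀.1.2 - 1), (i₀.1.1 + 1, i₀.1.2 + 1)} with hD
  have hDcard : D.card ≤ 4 := by
    refine (Finset.card_insert_le _ _).trans ?_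
    refine Nat.succ_le_succ ?_
    refine (Finset.card_insert_le _ _).trans ?_
    refine Nat.succ_le_succ ?_
    refine (Finset.card_insert_le _ _).trans ?_
    refine Nat.succ_le_succ ?_
    simp
  have himg : T.image Subtype.val ⊆ D := by
    intro x hx'
    obtain ⟨j, hjT, hjx⟩ := Finset.mem_image.mp hx'
    have hd : diagNbr j.1 i₀.1 := (Finset.mem_filter.mp hjT).2
    obtain ⟨h1, h2⟩ := hd
    subst hjx
    simp only [hD, Finset.mem_insert, Finset.mem_singleton, Prod.ext_iff]
    rcases h1 with h1 | h1 <;> rcases h2 with h2 | h2 <;> omega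
  have himgcard : (T.image Subtype.val).card = T.card :=
    Finset.card_image_of_injective T Subtype.val_injective
  have hTcard : T.card ≤ 4 := by
    rw [← himgcard]; exact (Finset.card_le_card himg).trans hDcard
  -- the slack sum is zero
  have hmemM : ∀ j ∈ T, ε * g j ≤ M := by
    intro j hj
    have hjs : j ∈ s := Finset.mem_of_mem_erase (Finset.mem_of_mem_filter j hj)
    exact (hεabs (g j)).trans (him j hjs)
  have hsumε : ∑ j ∈ T, ε * g j = 4 * M := by
    rw [← Finset.mul_sum, key, ← hεM]; ring
  have hslack : ∑ j ∈ T, (M - ε * g j) = 0 := by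
    have hle : ∑ j ∈ T, (M - ε * g j) ≤ 0 := by
      rw [Finset.sum_sub_distrib, Finset.sum_const, hsumε, nsmul_eq_mul]
      have : (T.card : ℝ) * M ≤ 4 * M := by
        apply mul_le_mul_of_nonneg_right _ hMpos.le
        exact_mod_cast hTcard
      linarith
    have hge : 0 ≤ ∑ j ∈ T, (M - ε * g j) :=
      Finset.sum_nonneg fun j hj => sub_nonneg.mpr (hmemM j hj)
    linarith
  have hall : ∀ j ∈ T, M - ε * g j = 0 :=
    (Finset.sum_eq_zero_iff_of_nonneg
      (fun j hj => sub_nonneg.mpr (hmemM j hj))).mp hslack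
  -- T has exactly 4 elements
  have hTcard4 : T.card = 4 := by
    have h4 : (T.card : ℝ) * M = 4 * M := by
      have := hslack
      rw [Finset.sum_sub_distrib, Finset.sum_const, hsumε, nsmul_eq_mul] at this
      linarith
    have : (T.card : ℝ) = 4 := by
      exact mul_right_cancel₀ hMpos.ne' h4
    exact_mod_cast this
  -- so the image is all of D, in particular contains the NE neighbor
  have heq : T.image Subtype.val = D :=
    Finset.eq_of_subset_of_card_le himg (by rw [himgcard, hTcard4]; exact hDcard)
  have hne2 : (i₀.1.1 + 1, i₀.1.2 + 1) ∈ T.image Subtype.val := by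
    rw [heq]; simp [hD]
  obtain ⟨j₁, hj₁T, hj₁⟩ := Finset.mem_image.mp hne2
  have hj₁s : j₁ ∈ s := Finset.mem_of_mem_erase (Finset.mem_of_mem_filter j₁ hj₁T)
  have hj₁M : |g j₁| = M := by
    have h1 : ε * g j₁ = M := by have := hall j₁ hj₁T; linarith
    have h2 : |g j₁| ≤ M := him j₁ hj₁s
    have h3 : M ≤ |g j₁| := h1 ▸ hεabs (g j₁)
    linarith
  have hj₁t : j₁ ∈ t := Finset.mem_filter.mpr ⟨hj₁s, hj₁M⟩
  have := hmax j₁ hj₁t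
  have : j₁.1.1 = i₀.1.1 + 1 := by rw [hj₁]
  omega
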